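/- With β_m as in the Thue-Morse continued fraction recursion, for all n ≥ 1 one has ν(∏_{i=1}^n β_i) = 2·τ₂(n-1), where ν is the degree valuation on ℚ(u) and τ₂ is the binary digit sum. -/

import Mathlib

/-- binary digit sum -/
def tau2 (n : ℕ) : ℕ := (Nat.digits 2 n).sum

lemma tau2_zero : tau2 0 = 0 := by simp [tau2]

lemma tau2_rec {n : ℕ} (hn : 0 < n) : tau2 n = n % 2 + tau2 (n / 2) := by
  unfold tau2
  rw [Nat.digits_def' (by norm_num) hn, List.sum_cons]

lemma tau2_two_mul (j : ℕ) : tau2 (2 * j) = tau2 j := by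
  rcases Nat.eq_zero_or_pos j with h | h
  · simp [h, tau2_zero]
  · rw [tau2_rec (by omega)]
    simp [Nat.mul_div_cancel_left j (by norm_num : 0 < 2), Nat.mul_mod_right]

lemma tau2_two_mul_add_one (j : ℕ) : tau2 (2 * j + 1) = tau2 j + 1 := by
  rw [tau2_rec (by omega)]
  have h1 : (2 * j + 1) % 2 = 1 := by omega
  have h2 : (2 * j + 1) / 2 = j := by omega
  rw [h1, h2]; ring

/-- degree sequence: `E m = intDegree (β (m+1))` -/
def E : ℕ → ℤ
  | 0 => 0
  | 1 => 2
  | (n + 2) => if n % 2 = 0 then E (n / 2 + 1) - 2 else 2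
decreasing_by omega

lemma E_odd (k : ℕ) : E (2 * k + 1) = 2 := by
  cases k with
  | zero => simp [E]
  | succ k =>
    show E (2 * k + 1 + 2) = 2
    rw [E]
    rw [if_neg (by omega)]

lemma E_even (k : ℕ) : E (2 * k + 2) = E (k + 1) - 2 := by
  show E (2 * k + 2) = E (k + 1) - 2
  rw [show 2 * k + 2 = (2 * k) + 2 from rfl, E]
  have h : (2 * k) % 2 = 0 := by omega
  rw [if_pos h]
  congr 2
  omega

lemma E_le_two : ∀ n, E n ≤ 2 := by
  intro n
  induction n using Nat.strong_induction_on with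
  | _ n ih =>
    match n with
    | 0 => norm_num [E]
    | 1 => norm_num [E]
    | (m + 2) =>
      rw [E]
      split
      · have := ih (m / 2 + 1) (by omega)
        omega
      · exact le_refl _

lemma E_eq_tau : ∀ n, 1 ≤ n → E n = 2 * (tau2 n : ℤ) - 2 * (tau2 (n - 1) : ℤ) := by
  intro n
  induction n using Nat.strong_induction_on with
  | _ n ih =>
    intro hn
    rcases Nat.even_or_odd n with ⟨j, hj⟩ | ⟨j, hj⟩
    · -- n = 2j, j ≥ 1
      have hj1 : 1 ≤ j := by omega
      have h1 : n = 2 * j := by omega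
      subst h1
      have hE : E (2 * j) = E j - 2 := by
        have := E_even (j - 1)
        rw [show 2 * (j - 1) + 2 = 2 * j by omega, show j - 1 + 1 = j by omega] at this
        exact this
      rw [hE, ih j (by omega) hj1, tau2_two_mul]
      have h2 : 2 * j - 1 = 2 * (j - 1) + 1 := by omega
      rw [h2, tau2_two_mul_add_one]
      push_cast
      omega
    · -- n = 2j + 1
      have h1 : n = 2 * j + 1 := by omega
      subst h1
      rw [E_odd, tau2_two_mul_add_one, show 2 * j + 1 - 1 = 2 * j by omega, tau2_two_mul]
      push_cast
      ring

open RatFunc in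
lemma intDegree_div {x y : RatFunc ℚ} (hx : x ≠ 0) (hy : y ≠ 0) :
    (x / y).intDegree = x.intDegree - y.intDegree := by
  have hxy : x / y ≠ 0 := div_ne_zero hx hy
  have h : x / y * y = x := div_mul_cancel₀ x hy
  have := intDegree_mul hxy hy
  rw [h] at this
  omega

open RatFunc in
lemma intDegree_add_eq_left {x y : RatFunc ℚ} (hx : x ≠ 0)
    (h : y.intDegree < x.intDegree ∨ y = 0) :
    x + y ≠ 0 ∧ (x + y).intDegree = x.intDegree := by
  by_cases hy : y = 0
  · subst hy
    simpa using hx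
  rcases h with h | h
  · have hne : x + y ≠ 0 := by
      intro h0
      have : x = -y := by linear_combination h0
      rw [this, intDegree_neg] at h
      omega
    refine ⟨hne, ?_⟩
    have h1 : (x + y).intDegree ≤ max x.intDegree y.intDegree := intDegree_add_le hy hne
    have hxx : (x + y) + (-y) = x := by ring
    have h2 := intDegree_add_le (neg_ne_zero.mpr hy) (by rw [hxx]; exact hx)
    rw [hxx, intDegree_neg] at h2
    omega
  · exact absurd h hy

open RatFunc in
lemma intDegree_X_sq : (RatFunc.X ^ 2 : RatFunc ℚ).intDegree = 2 := by
  rw [sq, intDegree_mul X_ne_zero X_ne_zero, intDegree_X]; norm_num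

open RatFunc in
lemma beta_deg (α β : ℕ → RatFunc ℚ)
    (hα : ∀ k : ℕ, α (2 * k + 1) = -RatFunc.X ∧ α (2 * k + 2) = RatFunc.X)
    (hβ1 : β 1 = 1)
    (hβ2 : β 2 = RatFunc.X ^ 2 - RatFunc.X)
    (hβodd : ∀ k : ℕ, β (2 * k + 3) = -(β (k + 2) / β (2 * k + 2)))
    (hβeven : ∀ k : ℕ, β (2 * k + 4) = α (k + 2) + RatFunc.X ^ 2 - β (2 * k + 3)) :
    ∀ m : ℕ, β (m + 1) ≠ 0 ∧ (β (m + 1)).intDegree = E m := by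
  intro m
  induction m using Nat.strong_induction_on with
  | _ m ih =>
    match m with
    | 0 => rw [hβ1]; exact ⟨one_ne_zero, by simp [E]⟩
    | 1 =>
      have h : (RatFunc.X ^ 2 : RatFunc ℚ) + (-RatFunc.X) ≠ 0 ∧
          ((RatFunc.X ^ 2 : RatFunc ℚ) + (-RatFunc.X)).intDegree = (RatFunc.X ^ 2 : RatFunc ℚ).intDegree := by
        apply intDegree_add_eq_left (pow_ne_zero 2 X_ne_zero)
        left
        rw [intDegree_neg, intDegree_X, intDegree_X_sq]
        norm_num
      rw [show (1 : ℕ) + 1 = 2 from rfl, hβ2, sub_eq_add_neg]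
      exact ⟨h.1, by rw [h.2, intDegree_X_sq]; simp [E]⟩
    | (j + 2) =>
      rcases Nat.even_or_odd j with ⟨k, hk⟩ | ⟨k, hk⟩
      · -- j = 2k, m = 2k+2, β (2k+3)
        have hm : j + 2 = 2 * k + 2 := by omega
        rw [hm]
        have ih1 := ih (k + 1) (by omega)
        have ih2 := ih (2 * k + 1) (by omega)
        rw [show 2 * k + 1 + 1 = 2 * k + 2 from rfl] at ih2
        rw [show 2 * k + 2 + 1 = 2 * k + 3 from rfl, hβodd k]
        have hne : β (k + 2) / β (2 * k + 2) ≠ 0 := div_ne_zero ih1.1 ih2.1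
        refine ⟨neg_ne_zero.mpr hne, ?_⟩
        rw [intDegree_neg, _root_.intDegree_div ih1.1 ih2.1, ih1.2, ih2.2, E_even, E_odd]
      · -- j = 2k+1, m = 2k+3, β (2k+4)
        have hm : j + 2 = 2 * k + 3 := by omega
        rw [hm]
        have ihb := ih (2 * k + 2) (by omega)
        rw [show 2 * k + 2 + 1 = 2 * k + 3 from rfl] at ihb
        have hdegb : (β (2 * k + 3)).intDegree ≤ 0 := by
          rw [ihb.2, E_even]
          have := E_le_two (k + 1)
          omega
        have hαdeg : (α (k + 2)).intDegree = 1 ∧ α (k + 2) ≠ 0 := by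
          rcases Nat.even_or_odd k with ⟨l, hl⟩ | ⟨l, hl⟩
          · have := (hα l).2
            rw [show k + 2 = 2 * l + 2 by omega, this, intDegree_X]
            exact ⟨rfl, X_ne_zero⟩
          · have := (hα (l + 1)).1
            rw [show k + 2 = 2 * (l + 1) + 1 by omega, this, intDegree_neg, intDegree_X]
            exact ⟨rfl, neg_ne_zero.mpr X_ne_zero⟩
        have step1 : (RatFunc.X ^ 2 : RatFunc ℚ) + α (k + 2) ≠ 0 ∧
            ((RatFunc.X ^ 2 : RatFunc ℚ) + α (k + 2)).intDegree = (RatFunc.X ^ 2 : RatFunc ℚ).intDegree := by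
          apply intDegree_add_eq_left (pow_ne_zero 2 X_ne_zero)
          left
          rw [hαdeg.1, intDegree_X_sq]
          norm_num
        have step2 : (RatFunc.X ^ 2 + α (k + 2)) + (-(β (2 * k + 3))) ≠ 0 ∧
            ((RatFunc.X ^ 2 + α (k + 2)) + (-(β (2 * k + 3)))).intDegree
              = (RatFunc.X ^ 2 + α (k + 2)).intDegree := by
          apply intDegree_add_eq_left step1.1
          left
          rw [intDegree_neg, step1.2, intDegree_X_sq]
          omega
        have hrw : β (2 * k + 3 + 1) = (RatFunc.X ^ 2 + α (k + 2)) + (-(β (2 * k + 3))) := by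
          rw [show 2 * k + 3 + 1 = 2 * k + 4 from rfl, hβeven k]
          ring
        rw [hrw]
        refine ⟨step2.1, ?_⟩
        rw [step2.2, step1.2, intDegree_X_sq, show 2 * k + 3 = 2 * (k + 1) + 1 by omega, E_odd]

/-- With `β_m` as in the Thue–Morse continued fraction recursion, for all `n ≥ 1`
one has `ν(∏_{i=1}^n β_i) = 2·τ₂(n-1)`, where `ν` is the degree valuation
(`RatFunc.intDegree`) on `ℚ(u)`. -/
theorem prod_beta_intDegree
    (α β : ℕ → RatFunc ℚ)
    (hα : ∀ k : ℕ, α (2 * k + 1) = -RatFunc.X ∧ α (2 * k + 2) = RatFunc.X)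
    (hβ1 : β 1 = 1)
    (hβ2 : β 2 = RatFunc.X ^ 2 - RatFunc.X)
    (hβodd : ∀ k : ℕ, β (2 * k + 3) = -(β (k + 2) / β (2 * k + 2)))
    (hβeven : ∀ k : ℕ, β (2 * k + 4) = α (k + 2) + RatFunc.X ^ 2 - β (2 * k + 3)) :
    ∀ n : ℕ, 1 ≤ n →
      (∏ i ∈ Finset.Icc 1 n, β i).intDegree = 2 * (tau2 (n - 1) : ℤ) := by
  have key := beta_deg α β hα hβ1 hβ2 hβodd hβeven
  have main : ∀ n : ℕ, 1 ≤ n → (∏ i ∈ Finset.Icc 1 n, β i) ≠ 0 ∧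
      (∏ i ∈ Finset.Icc 1 n, β i).intDegree = 2 * (tau2 (n - 1) : ℤ) := by
    intro n hn
    induction n, hn using Nat.le_induction with
    | base =>
      simp only [Finset.Icc_self, Finset.prod_singleton, hβ1]
      exact ⟨one_ne_zero, by simp [tau2_zero]⟩
    | succ n hn ih =>
      rw [Finset.prod_Icc_succ_top (by omega)]
      have hb := key n
      refine ⟨mul_ne_zero ih.1 hb.1, ?_⟩
      rw [RatFunc.intDegree_mul ih.1 hb.1, ih.2, hb.2, E_eq_tau n hn]
      have : n + 1 - 1 = n := by omega
      rw [this]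
      ring
  exact fun n hn => (main n hn).2
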